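/- Let θ > 0 and Δ_n > 0 with Δ_n → 0 and nΔ_n → ∞. With ρ(t) = e^{-θ|t|}/(2θ), there is a constant C > 0 depending only on θ such that for all large n, |(2Δ_n/n) Σ_{i,j=0}^{n-1} ρ((j-i)Δ_n)² - 1/(2θ³)| ≤ C(Δ_n² + 1/(nΔ_n)). -/

import Mathlib

open Real Filter Finset

lemma cast_natDist (i j : ℕ) : ((Nat.dist i j : ℕ) : ℝ) = |(j:ℝ) - i| := by
  rcases le_total i j with h | h
  · rw [Nat.dist_eq_sub_of_le h, abs_of_nonneg (sub_nonneg.2 (Nat.cast_le.2 h))]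
    push_cast [h]; ring
  · rw [Nat.dist_eq_sub_of_le_right h, abs_of_nonpos (sub_nonpos.2 (Nat.cast_le.2 h))]
    push_cast [h]; ring

lemma sum_dist (r : ℝ) (n : ℕ) :
    ∑ i ∈ range n, ∑ j ∈ range n, r ^ (Nat.dist i j)
      = 2 * ∑ k ∈ range n, ((n : ℝ) - k) * r ^ k - n := by
  induction n with
  | zero => simp
  | succ n ih =>
    rw [Finset.sum_range_succ]
    have h1 : ∀ i ∈ range n, ∑ j ∈ range (n+1), r ^ (Nat.dist i j)
        = (∑ j ∈ range n, r ^ (Nat.dist i j)) + r ^ (n - i) := by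
      intro i hi
      rw [Finset.sum_range_succ, Nat.dist_eq_sub_of_le (le_of_lt (mem_range.1 hi))]
    rw [Finset.sum_congr rfl h1, Finset.sum_add_distrib, ih, Finset.sum_range_succ,
      Nat.dist_self]
    have h3 : (∑ j ∈ range n, r ^ (Nat.dist n j)) = ∑ j ∈ range n, r ^ (n - j) :=
      Finset.sum_congr rfl fun j hj =>
        by rw [Nat.dist_eq_sub_of_le_right (le_of_lt (mem_range.1 hj))]
    rw [h3]
    have h4 : (∑ j ∈ range n, r ^ (n - j)) = ∑ j ∈ range n, r ^ (j + 1) := by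
      rw [← Finset.sum_range_reflect]
      refine Finset.sum_congr rfl fun j hj => ?_
      congr 1
      have := mem_range.1 hj
      omega
    have h5 : (∑ j ∈ range n, r ^ (j+1)) + 1 = (∑ k ∈ range n, r ^ k) + r ^ n := by
      have h6 := geom_sum_succ (R := ℝ) (x := r) (n := n)
      have h7 := geom_sum_succ' (R := ℝ) (x := r) (n := n)
      have h9 : ∑ j ∈ range n, r ^ (j+1) = r * ∑ j ∈ range n, r ^ j := by
        rw [Finset.mul_sum]; exact Finset.sum_congr rfl fun j _ => by ring
      rw [h9]; linarith
    have hR : ∑ k ∈ range (n+1), ((↑(n+1):ℝ) - k) * r ^ k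
        = (∑ k ∈ range n, ((n:ℝ) - k) * r ^ k) + (∑ k ∈ range n, r ^ k) + r ^ n := by
      rw [Finset.sum_range_succ]
      push_cast
      have : ∑ k ∈ range n, ((n:ℝ) + 1 - k) * r ^ k
          = (∑ k ∈ range n, ((n:ℝ) - k) * r ^ k) + ∑ k ∈ range n, r ^ k := by
        rw [← Finset.sum_add_distrib]
        exact Finset.sum_congr rfl fun k _ => by ring
      rw [this]; ring
    rw [h4, hR]
    push_cast
    linarith

lemma f_hasDeriv (x : ℝ) : HasDerivAt (fun x : ℝ => x * exp x + x - 2 * exp x + 2)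
    (1 * exp x + x * exp x + 1 - 2 * exp x + 0) x := by
  have h1 := (hasDerivAt_id x).mul (Real.hasDerivAt_exp x)
  have h2 := ((h1.add (hasDerivAt_id x)).sub ((Real.hasDerivAt_exp x).const_mul 2)).add_const 2
  simpa [mul_comm] using h2

lemma f_nonneg {x : ℝ} (hx : 0 ≤ x) : 0 ≤ x * exp x + x - 2 * exp x + 2 := by
  have hmono : Monotone (fun x : ℝ => x * exp x + x - 2 * exp x + 2) := by
    refine monotone_of_deriv_nonneg (fun x => (f_hasDeriv x).differentiableAt) (fun x => ?_)
    rw [(f_hasDeriv x).deriv]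
    have h : -x + 1 ≤ exp (-x) := Real.add_one_le_exp (-x)
    have h2 : exp (-x) * exp x = 1 := by rw [← Real.exp_add]; simp
    nlinarith [Real.exp_pos x, Real.exp_pos (-x)]
  have := hmono hx
  simpa using this

lemma g_hasDeriv (x : ℝ) : HasDerivAt
    (fun x : ℝ => x ^ 2 * (exp x - 1) - (x * exp x + x - 2 * exp x + 2))
    ((2 * x * (exp x - 1) + x ^ 2 * exp x) - (1 * exp x + x * exp x + 1 - 2 * exp x + 0)) x := by
  have h0 : HasDerivAt (fun x : ℝ => x ^ 2) (2 * x) x := by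
    simpa using hasDerivAt_pow 2 x
  have h1 := h0.mul ((Real.hasDerivAt_exp x).sub_const 1)
  exact h1.sub (f_hasDeriv x)

lemma f_le {x : ℝ} (hx : 0 ≤ x) :
    x * exp x + x - 2 * exp x + 2 ≤ x ^ 2 * (exp x - 1) := by
  have hmono : Monotone (fun x : ℝ => x ^ 2 * (exp x - 1) - (x * exp x + x - 2 * exp x + 2)) := by
    refine monotone_of_deriv_nonneg (fun x => (g_hasDeriv x).differentiableAt) (fun x => ?_)
    rw [(g_hasDeriv x).deriv]
    have h : x + 1 ≤ exp x := Real.add_one_le_exp x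
    nlinarith [Real.exp_pos x, sq_nonneg x, sq_nonneg (x + 2),
      mul_nonneg (sq_nonneg x) (Real.exp_pos x).le]
  have := hmono hx
  simp only [ne_eq, OfNat.ofNat_ne_zero, not_false_eq_true, zero_pow, exp_zero] at this
  nlinarith [this]

set_option maxHeartbeats 1000000 in
/-- Variance asymptotics: with `ρ(t) = e^{-θ|t|}/(2θ)`, `Δ_n → 0` and `nΔ_n → ∞`,
there is `C > 0` (depending only on `θ`) such that for all large `n`,
`|(2Δ_n/n) Σ_{i,j<n} ρ((j-i)Δ_n)² - 1/(2θ³)| ≤ C(Δ_n² + 1/(nΔ_n))`. -/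
theorem variance_asymptotics
    (θ : ℝ) (hθ : 0 < θ) (Δ : ℕ → ℝ) (hΔpos : ∀ n, 0 < Δ n)
    (hΔ0 : Tendsto Δ atTop (nhds 0))
    (hT : Tendsto (fun n : ℕ => (n : ℝ) * Δ n) atTop atTop) :
    ∃ C > 0, ∀ᶠ n : ℕ in atTop,
      |(2 * Δ n / n) * ∑ i ∈ range n, ∑ j ∈ range n,
          (exp (-θ * |((j : ℝ) - i) * Δ n|) / (2 * θ)) ^ 2
        - 1 / (2 * θ ^ 3)|
      ≤ C * ((Δ n) ^ 2 + 1 / ((n : ℝ) * Δ n)) := by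
  refine ⟨1/θ + 5/θ^4, by positivity, ?_⟩
  have hsm : ∀ᶠ n : ℕ in atTop, Δ n ≤ 1/(2*θ) :=
    hΔ0.eventually (eventually_le_nhds (by positivity))
  filter_upwards [eventually_ge_atTop 1, hsm] with n hn hsmn
  set d := Δ n with hd_def
  have hd : 0 < d := hΔpos n
  have hN1 : (1:ℝ) ≤ (n:ℝ) := by exact_mod_cast hn
  have hNpos : (0:ℝ) < n := lt_of_lt_of_le one_pos hN1
  set r := exp (-(2*θ*d)) with hr_def
  have hr0 : 0 < r := exp_pos _
  have hr1 : r < 1 := by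
    have h : exp (-(2*θ*d)) < exp 0 := Real.exp_lt_exp.2 (by nlinarith)
    rwa [Real.exp_zero] at h
  have h1r : 0 < 1 - r := by linarith
  have hrx : r * exp (2*θ*d) = 1 := by rw [hr_def, ← Real.exp_add]; simp
  have hx1 : 2*θ*d ≤ 1 := by
    have := (le_div_iff₀ (by positivity : (0:ℝ) < 2*θ)).1 hsmn
    linarith [this]
  have hr3 : (1:ℝ)/3 ≤ r := by
    have h1 : exp (-(1:ℝ)) ≤ r := Real.exp_le_exp.2 (by nlinarith)
    have h2 : exp 1 < 3 := lt_trans Real.exp_one_lt_d9 (by norm_num)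
    have h3 : exp (-(1:ℝ)) * exp 1 = 1 := by rw [← Real.exp_add]; simp
    nlinarith [Real.exp_pos 1, Real.exp_pos (-(1:ℝ))]
  have hlowr : 2*θ*d/3 ≤ 1 - r := by
    have h := Real.add_one_le_exp (2*θ*d)
    have h2 : (2*θ*d + 1) * r ≤ exp (2*θ*d) * r := mul_le_mul_of_nonneg_right h hr0.le
    nlinarith [mul_pos (mul_pos two_pos hθ) hd]
  -- rewrite double sum
  have hsum : ∑ i ∈ range n, ∑ j ∈ range n, (exp (-θ * |((j : ℝ) - i) * d|) / (2 * θ)) ^ 2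
      = (2 * ∑ k ∈ range n, ((n : ℝ) - k) * r ^ k - n) * (1/(4*θ^2)) := by
    rw [← sum_dist r n, Finset.sum_mul]
    refine Finset.sum_congr rfl fun i _ => ?_
    rw [Finset.sum_mul]
    refine Finset.sum_congr rfl fun j _ => ?_
    have habs : |((j:ℝ) - i) * d| = (Nat.dist i j : ℝ) * d := by
      rw [abs_mul, abs_of_pos hd, cast_natDist]
    rw [habs, show -θ * ((Nat.dist i j:ℝ) * d) = (Nat.dist i j : ℝ) * (-(θ*d)) by ring,
      Real.exp_nat_mul, div_pow, ← pow_mul, mul_comm (Nat.dist i j) 2, pow_mul]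
    have hsq : exp (-(θ*d)) ^ 2 = r := by
      rw [sq, ← Real.exp_add, hr_def]; congr 1; ring
    rw [hsq]
    field_simp
    ring
  rw [hsum]
  set G := ∑ k ∈ range n, r^k with hG_def
  set K := ∑ k ∈ range n, (k:ℝ) * r^k with hK_def
  have hsplit : ∑ k ∈ range n, ((n : ℝ) - k) * r ^ k = (n:ℝ) * G - K := by
    rw [hG_def, hK_def, Finset.mul_sum, ← Finset.sum_sub_distrib]
    exact Finset.sum_congr rfl fun k _ => by ring
  rw [hsplit]
  -- geometric bounds
  have hgs : HasSum (fun k : ℕ => r^k) (1-r)⁻¹ := hasSum_geometric_of_lt_one hr0.le hr1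
  have hG_le : G ≤ (1-r)⁻¹ :=
    sum_le_hasSum (range n) (fun k _ => pow_nonneg hr0.le k) hgs
  have hG_eq : (1-r)⁻¹ - G = r^n * (1-r)⁻¹ := by
    rw [hG_def, geom_sum_eq hr1.ne]
    field_simp [sub_ne_zero.2 hr1.ne]
    ring
  have hrn_le : (n:ℝ) * r^n ≤ (1-r)⁻¹ := by
    have h1 : (n:ℝ) * r^n = ∑ _k ∈ range n, r^n := by
      rw [Finset.sum_const, Finset.card_range, nsmul_eq_mul]
    have h2 : ∑ _k ∈ range n, r^n ≤ G :=
      Finset.sum_le_sum fun k hk =>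
        pow_le_pow_of_le_one hr0.le hr1.le (le_of_lt (mem_range.1 hk))
    linarith
  have hgap_nonneg : 0 ≤ (1-r)⁻¹ - G := by
    rw [hG_eq]; exact mul_nonneg (pow_nonneg hr0.le n) (inv_nonneg.2 h1r.le)
  have hgap_le : (1-r)⁻¹ - G ≤ 1/((n:ℝ) * (1-r)^2) := by
    rw [hG_eq, ← div_eq_mul_inv, div_le_div_iff₀ h1r (by positivity)]
    have h3 : (n:ℝ)*r^n * (1-r) ≤ (1-r)⁻¹ * (1-r) := mul_le_mul_of_nonneg_right hrn_le h1r.le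
    rw [inv_mul_cancel₀ h1r.ne'] at h3
    calc r^n*((n:ℝ)*(1-r)^2) = ((n:ℝ)*r^n*(1-r))*(1-r) := by ring
      _ ≤ 1*(1-r) := mul_le_mul_of_nonneg_right h3 h1r.le
  have hK0 : 0 ≤ K := Finset.sum_nonneg fun k _ => by positivity
  have hK_le : K ≤ 1/(1-r)^2 := by
    have hs : HasSum (fun k : ℕ => (k:ℝ) * r^k) (r / (1-r)^2) :=
      hasSum_coe_mul_geometric_of_norm_lt_one (by rwa [Real.norm_eq_abs, abs_of_pos hr0])
    have h1 : K ≤ r/(1-r)^2 := sum_le_hasSum (range n) (fun k _ => by positivity) hs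
    have h2 : r/(1-r)^2 ≤ 1/(1-r)^2 := by gcongr
    linarith
  clear_value G K
  clear hsum hsplit hgs hG_le
  -- algebraic reorganization
  have hE : 2*d/(n:ℝ) * ((2*((n:ℝ)*G - K) - (n:ℝ)) * (1/(4*θ^2)))
      = (d/θ^2)*G - (d/(θ^2*(n:ℝ)))*K - d/(2*θ^2) := by
    field_simp
    ring
  rw [hE]
  set M := d*(1+r)/(2*θ^2*(1-r)) with hM_def
  have hEM : (d/θ^2)*G - (d/(θ^2*(n:ℝ)))*K - d/(2*θ^2) - 1/(2*θ^3)
      = (M - 1/(2*θ^3)) - ((d/θ^2)*((1-r)⁻¹ - G) + (d/(θ^2*(n:ℝ)))*K) := by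
    rw [hM_def]
    field_simp
    ring
  rw [hEM]
  -- main term bounds
  have hM_eq : M - 1/(2*θ^3) = ((2*θ*d) + (2*θ*d)*r - 2 + 2*r) / (4*θ^3*(1-r)) := by
    rw [hM_def]
    field_simp
    ring
  have hnum_eq : (2*θ*d) + (2*θ*d)*r - 2 + 2*r
      = r * ((2*θ*d)*exp (2*θ*d) + (2*θ*d) - 2*exp (2*θ*d) + 2) := by
    linear_combination (2 - 2*θ*d) * hrx
  have hnum0 : 0 ≤ (2*θ*d) + (2*θ*d)*r - 2 + 2*r := by
    rw [hnum_eq]; exact mul_nonneg hr0.le (f_nonneg (by positivity))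
  have hnum1 : (2*θ*d) + (2*θ*d)*r - 2 + 2*r ≤ (2*θ*d)^2 * (1-r) := by
    rw [hnum_eq]
    have h1 := f_le (x := 2*θ*d) (by positivity)
    have h2 : r * ((2*θ*d)^2*(exp (2*θ*d) - 1)) = (2*θ*d)^2 * (1 - r) := by
      linear_combination (2*θ*d)^2 * hrx
    calc r * ((2*θ*d)*exp (2*θ*d) + (2*θ*d) - 2*exp (2*θ*d) + 2)
        ≤ r * ((2*θ*d)^2*(exp (2*θ*d) - 1)) := mul_le_mul_of_nonneg_left h1 hr0.le
      _ = (2*θ*d)^2 * (1 - r) := h2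
  have hP1a : 0 ≤ M - 1/(2*θ^3) := by
    rw [hM_eq]; exact div_nonneg hnum0 (by positivity)
  have hP1b : M - 1/(2*θ^3) ≤ d^2/θ := by
    rw [hM_eq, div_le_div_iff₀ (by positivity) hθ]
    calc ((2*θ*d) + (2*θ*d)*r - 2 + 2*r) * θ
        ≤ ((2*θ*d)^2*(1-r))*θ := mul_le_mul_of_nonneg_right hnum1 hθ.le
      _ = d^2*(4*θ^3*(1-r)) := by ring
  -- error term bounds
  have hP2a : 0 ≤ (d/θ^2)*((1-r)⁻¹ - G) + (d/(θ^2*(n:ℝ)))*K :=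
    add_nonneg (mul_nonneg (by positivity) hgap_nonneg) (mul_nonneg (by positivity) hK0)
  have hP2b : (d/θ^2)*((1-r)⁻¹ - G) + (d/(θ^2*(n:ℝ)))*K ≤ 5/(θ^4*((n:ℝ)*d)) := by
    have h1 : (d/θ^2)*((1-r)⁻¹ - G) ≤ (d/θ^2) * (1/((n:ℝ)*(1-r)^2)) :=
      mul_le_mul_of_nonneg_left hgap_le (by positivity)
    have h2 : (d/(θ^2*(n:ℝ)))*K ≤ (d/(θ^2*(n:ℝ))) * (1/(1-r)^2) :=
      mul_le_mul_of_nonneg_left hK_le (by positivity)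
    have h3 : (d/θ^2) * (1/((n:ℝ)*(1-r)^2)) + (d/(θ^2*(n:ℝ))) * (1/(1-r)^2)
        = 2*d/(θ^2*(n:ℝ)*(1-r)^2) := by
      field_simp
      ring
    have h5 : (2*θ*d/3)^2 ≤ (1-r)^2 := pow_le_pow_left₀ (by positivity) hlowr 2
    have h4 : 2*d/(θ^2*(n:ℝ)*(1-r)^2) ≤ 5/(θ^4*((n:ℝ)*d)) := by
      rw [div_le_div_iff₀ (by positivity) (by positivity)]
      have h6 := mul_le_mul_of_nonneg_left h5 (show (0:ℝ) ≤ 5*(θ^2*(n:ℝ)) by positivity)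
      have h7 : (0:ℝ) ≤ θ^4*(n:ℝ)*d^2 := by positivity
      nlinarith [h6, h7]
    linarith
  -- conclude
  have hfin1 : d^2/θ ≤ (1/θ + 5/θ^4) * (d^2 + 1/((n:ℝ)*d)) := by
    have h1 : d^2/θ = (1/θ) * d^2 := by ring
    rw [h1]
    refine mul_le_mul ?_ ?_ (by positivity) (by positivity)
    · linarith [show (0:ℝ) ≤ 5/θ^4 by positivity]
    · linarith [show (0:ℝ) ≤ 1/((n:ℝ)*d) by positivity]
  have hfin2 : 5/(θ^4*((n:ℝ)*d)) ≤ (1/θ + 5/θ^4) * (d^2 + 1/((n:ℝ)*d)) := by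
    have h1 : 5/(θ^4*((n:ℝ)*d)) = (5/θ^4) * (1/((n:ℝ)*d)) := by
      rw [div_mul_div_comm]; norm_num
    rw [h1]
    refine mul_le_mul ?_ ?_ (by positivity) (by positivity)
    · linarith [show (0:ℝ) ≤ 1/θ by positivity]
    · linarith [show (0:ℝ) ≤ d^2 by positivity]
  exact abs_le.2 ⟨by linarith, by linarith⟩
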